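/- Strict order embeddings are stable under pushout in Posets: in a pushout square in the category of posets with f : (P₀,≤₀) → (P₁,≤₁) a strict order embedding and g : (P₀,≤₀) → (P₂,≤₂) an arbitrary monotone map, the opposite pushout morphism f' : (P₂,≤₂) → (P₃,≤₃) is again a strict order embedding. -/

import Mathlib

open CategoryTheory Limits

/-- A strict order embedding: a monotone map reflecting the order such that
every element lying between two images is itself an image. -/
def StrictOrderEmbedding {P P' : Type} [PartialOrder P] [PartialOrder P']
    (f : P → P') : Prop :=
  Monotone f ∧ (∀ x y : P, x ≤ y ↔ f x ≤ f y) ∧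
    (∀ x y : P, ∀ z' : P', f x ≤ z' → z' ≤ f y → ∃ z : P, f z = z')

/-- The underlying monotone map of a morphism of posets. -/
def homFn {X Y : PartOrd} (f : X ⟶ Y) : X →o Y := f.hom

/-- A morphism of posets that is a strict order embedding. -/
def IsM {X Y : PartOrd} (f : X ⟶ Y) : Prop := StrictOrderEmbedding ⇑(homFn f)

namespace StmtAux

variable {A B C : Type} [PartialOrder A] [PartialOrder B] [PartialOrder C]

/-- Underlying type of the explicit pushout model. -/
def Q (f : A →o B) (_g : A →o C) : Type := C ⊕ {w : B // w ∉ Set.range f}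

/-- The candidate order relation on the explicit pushout. -/
def qle (f : A →o B) (g : A →o C) : Q f g → Q f g → Prop
  | Sum.inl z, Sum.inl z' => z ≤ z'
  | Sum.inl z, Sum.inr w => ∃ a, z ≤ g a ∧ f a ≤ w.1
  | Sum.inr w, Sum.inl z => ∃ a, w.1 ≤ f a ∧ g a ≤ z
  | Sum.inr w, Sum.inr w' => w.1 ≤ w'.1 ∨ ∃ a b, w.1 ≤ f a ∧ g a ≤ g b ∧ f b ≤ w'.1

variable (f : A →o B) (g : A →o C)
variable (hrefl : ∀ x y : A, x ≤ y ↔ f x ≤ f y)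
variable (hfill : ∀ x y : A, ∀ z' : B, f x ≤ z' → z' ≤ f y → ∃ z : A, f z = z')

/-- The explicit pushout as a partial order. -/
def qpo : PartialOrder (Q f g) where
  le := qle f g
  le_refl x := by cases x with
    | inl z => exact le_refl z
    | inr w => exact Or.inl (le_refl w.1)
  le_trans x y z hxy hyz := by
    have gmono : ∀ a b : A, f a ≤ f b → g a ≤ g b := fun a b h =>
      g.monotone ((hrefl a b).2 h)
    cases x with
    | inl x => cases y with
      | inl y => cases z with
        | inl z => exact le_trans hxy hyz
        | inr w =>
          obtain ⟨a, h1, h2⟩ := hyz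
          exact ⟨a, le_trans hxy h1, h2⟩
      | inr w => cases z with
        | inl z =>
          obtain ⟨a, h1, h2⟩ := hxy
          obtain ⟨b, h3, h4⟩ := hyz
          obtain ⟨c, hc⟩ := hfill a b w.1 h2 h3
          exact absurd ⟨c, hc⟩ w.2
        | inr w' =>
          obtain ⟨a, h1, h2⟩ := hxy
          rcases hyz with h | ⟨c, d, h3, h4, h5⟩
          · exact ⟨a, h1, le_trans h2 h⟩
          · obtain ⟨e, he⟩ := hfill a c w.1 h2 h3
            exact absurd ⟨e, he⟩ w.2
    | inr w => cases y with
      | inl y => cases z with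
        | inl z =>
          obtain ⟨a, h1, h2⟩ := hxy
          exact ⟨a, h1, le_trans h2 hyz⟩
        | inr w' =>
          obtain ⟨a, h1, h2⟩ := hxy
          obtain ⟨b, h3, h4⟩ := hyz
          exact Or.inr ⟨a, b, h1, le_trans h2 h3, h4⟩
      | inr w' => cases z with
        | inl z =>
          obtain ⟨b, h3, h4⟩ := hyz
          rcases hxy with h | ⟨c, d, h5, h6, h7⟩
          · exact ⟨b, le_trans h h3, h4⟩
          · exact ⟨c, h5, le_trans (le_trans h6 (gmono d b (le_trans h7 h3))) h4⟩
        | inr w'' =>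
          rcases hxy with h | ⟨a, b, h1, h2, h3⟩
          · rcases hyz with h' | ⟨c, d, h4, h5, h6⟩
            · exact Or.inl (le_trans h h')
            · exact Or.inr ⟨c, d, le_trans h h4, h5, h6⟩
          · rcases hyz with h' | ⟨c, d, h4, h5, h6⟩
            · exact Or.inr ⟨a, b, h1, h2, le_trans h3 h'⟩
            · exact Or.inr ⟨a, d, h1,
                le_trans h2 (le_trans (gmono b c (le_trans h3 h4)) h5), h6⟩
  le_antisymm x y hxy hyx := by
    cases x with
    | inl x => cases y with
      | inl y => exact congrArg Sum.inl (le_antisymm hxy hyx)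
      | inr w =>
        obtain ⟨a, _, h2⟩ := hxy
        obtain ⟨b, h3, _⟩ := hyx
        obtain ⟨c, hc⟩ := hfill a b w.1 h2 h3
        exact absurd ⟨c, hc⟩ w.2
    | inr w => cases y with
      | inl y =>
        obtain ⟨a, h1, _⟩ := hxy
        obtain ⟨b, _, h4⟩ := hyx
        obtain ⟨c, hc⟩ := hfill b a w.1 h4 h1
        exact absurd ⟨c, hc⟩ w.2
      | inr w' =>
        rcases hxy with h | ⟨a, b, h1, h2, h3⟩
        · rcases hyx with h' | ⟨c, d, h4, h5, h6⟩
          · exact congrArg Sum.inr (Subtype.ext (le_antisymm h h'))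
          · obtain ⟨e, he⟩ := hfill d c w.1 h6 (le_trans h h4)
            exact absurd ⟨e, he⟩ w.2
        · rcases hyx with h' | ⟨c, d, h4, h5, h6⟩
          · obtain ⟨e, he⟩ := hfill b a w'.1 h3 (le_trans h' h1)
            exact absurd ⟨e, he⟩ w'.2
          · obtain ⟨e, he⟩ := hfill b c w'.1 h3 h4
            exact absurd ⟨e, he⟩ w'.2

end StmtAux

/-- Strict order embeddings are stable under pushout in the category of
posets: in a pushout square with one leg a strict order embedding, the
opposite pushout morphism is again a strict order embedding. -/
theorem stmt_13 {P₀ P₁ P₂ P₃ : PartOrd} (f : P₀ ⟶ P₁) (g : P₀ ⟶ P₂)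
    (g' : P₁ ⟶ P₃) (f' : P₂ ⟶ P₃)
    (hpo : IsPushout f g g' f') (hf : IsM f) : IsM f' := by
  classical
  obtain ⟨fmono, frefl, ffill⟩ := hf
  have finj : Function.Injective ⇑(homFn f) := fun a b h =>
    le_antisymm ((frefl a b).2 h.le) ((frefl b a).2 h.ge)
  letI qinst : PartialOrder (StmtAux.Q (homFn f) (homFn g)) :=
    StmtAux.qpo (homFn f) (homFn g) frefl ffill
  let QO : PartOrd := PartOrd.of (StmtAux.Q (homFn f) (homFn g))
  -- the two legs of the explicit cocone
  let i₂ : P₂ ⟶ QO := ConcreteCategory.ofHom (C := PartOrd) (OrderHom.mk Sum.inl (fun _ _ h => h))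
  let jfun : ↑P₁ → ↑QO := fun w =>
    if h : w ∈ Set.range ⇑(homFn f) then Sum.inl (homFn g h.choose)
    else Sum.inr ⟨w, h⟩
  have jspec1 : ∀ (w : ↑P₁) (h : w ∈ Set.range ⇑(homFn f)),
      jfun w = Sum.inl (homFn g h.choose) := fun w h => dif_pos h
  have jspec2 : ∀ (w : ↑P₁) (h : w ∉ Set.range ⇑(homFn f)),
      jfun w = Sum.inr ⟨w, h⟩ := fun w h => dif_neg h
  have jmono : Monotone jfun := by
    intro w w' hww
    by_cases h : w ∈ Set.range ⇑(homFn f) <;>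
      by_cases h' : w' ∈ Set.range ⇑(homFn f)
    · rw [jspec1 w h, jspec1 w' h']
      have : homFn f h.choose ≤ homFn f h'.choose := by
        rw [h.choose_spec, h'.choose_spec]; exact hww
      exact (homFn g).monotone ((frefl _ _).2 this)
    · rw [jspec1 w h, jspec2 w' h']
      exact ⟨h.choose, le_refl _, by rw [h.choose_spec]; exact hww⟩
    · rw [jspec2 w h, jspec1 w' h']
      exact ⟨h'.choose, by rw [h'.choose_spec]; exact hww, le_refl _⟩
    · rw [jspec2 w h, jspec2 w' h']
      exact Or.inl hww
  let i₁ : P₁ ⟶ QO := ConcreteCategory.ofHom (C := PartOrd) (OrderHom.mk jfun jmono)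
  have hcomm : f ≫ i₁ = g ≫ i₂ := by
    apply PartOrd.hom_ext
    apply OrderHom.ext
    funext a
    show jfun (homFn f a) = Sum.inl (homFn g a)
    have h : homFn f a ∈ Set.range ⇑(homFn f) := ⟨a, rfl⟩
    rw [jspec1 _ h]
    exact congrArg Sum.inl (congrArg _ (finj h.choose_spec))
  let d : P₃ ⟶ QO := hpo.desc i₁ i₂ hcomm
  have hd1 : g' ≫ d = i₁ := hpo.inl_desc i₁ i₂ hcomm
  have hd2 : f' ≫ d = i₂ := hpo.inr_desc i₁ i₂ hcomm
  have hdf' : ∀ z : ↑P₂, homFn d (homFn f' z) = Sum.inl z := by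
    intro z
    have := congrArg (fun (k : P₂ ⟶ QO) => homFn k z) hd2
    exact this
  -- retraction of d
  have hsq : ∀ a : ↑P₀, homFn g' (homFn f a) = homFn f' (homFn g a) := by
    intro a
    exact congrArg (fun (k : P₀ ⟶ P₃) => homFn k a) hpo.w
  let efun : ↑QO → ↑P₃ := fun q => match q with
    | Sum.inl z => homFn f' z
    | Sum.inr w => homFn g' w.1
  have emono : Monotone efun := by
    intro q q' hqq
    match q, q' with
    | Sum.inl z, Sum.inl z' => exact (homFn f').monotone hqq
    | Sum.inl z, Sum.inr w =>
      obtain ⟨a, h1, h2⟩ := hqq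
      calc homFn f' z ≤ homFn f' (homFn g a) := (homFn f').monotone h1
        _ = homFn g' (homFn f a) := (hsq a).symm
        _ ≤ homFn g' w.1 := (homFn g').monotone h2
    | Sum.inr w, Sum.inl z =>
      obtain ⟨a, h1, h2⟩ := hqq
      calc homFn g' w.1 ≤ homFn g' (homFn f a) := (homFn g').monotone h1
        _ = homFn f' (homFn g a) := hsq a
        _ ≤ homFn f' z := (homFn f').monotone h2
    | Sum.inr w, Sum.inr w' =>
      rcases hqq with h | ⟨a, b, h1, h2, h3⟩
      · exact (homFn g').monotone h
      · calc homFn g' w.1 ≤ homFn g' (homFn f a) := (homFn g').monotone h1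
          _ = homFn f' (homFn g a) := hsq a
          _ ≤ homFn f' (homFn g b) := (homFn f').monotone h2
          _ = homFn g' (homFn f b) := (hsq b).symm
          _ ≤ homFn g' w'.1 := (homFn g').monotone h3
  let e : QO ⟶ P₃ := ConcreteCategory.ofHom (C := PartOrd) (OrderHom.mk efun emono)
  have hde : d ≫ e = 𝟙 P₃ := by
    apply hpo.hom_ext
    · rw [← Category.assoc, hd1, Category.comp_id]
      apply PartOrd.hom_ext
      apply OrderHom.ext
      funext w
      show efun (jfun w) = homFn g' w
      by_cases h : w ∈ Set.range ⇑(homFn f)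
      · rw [jspec1 w h]
        show homFn f' (homFn g h.choose) = homFn g' w
        rw [← hsq h.choose, h.choose_spec]
      · rw [jspec2 w h]
    · rw [← Category.assoc, hd2, Category.comp_id]
      rfl
  have hde' : ∀ t : ↑P₃, efun (homFn d t) = t := by
    intro t
    exact congrArg (fun (k : P₃ ⟶ P₃) => homFn k t) hde
  refine ⟨(homFn f').monotone, fun x y => ⟨fun h => (homFn f').monotone h, fun h => ?_⟩,
    fun x y z' h1 h2 => ?_⟩
  · have : homFn d (homFn f' x) ≤ homFn d (homFn f' y) := (homFn d).monotone h
    rw [hdf' x, hdf' y] at this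
    exact this
  · have hx : homFn d (homFn f' x) ≤ homFn d z' := (homFn d).monotone h1
    have hy : homFn d z' ≤ homFn d (homFn f' y) := (homFn d).monotone h2
    rw [hdf' x] at hx
    rw [hdf' y] at hy
    match hq : homFn d z' with
    | Sum.inl z =>
      refine ⟨z, ?_⟩
      have := hde' z'
      rw [hq] at this
      exact this
    | Sum.inr w =>
      rw [hq] at hx hy
      obtain ⟨a, _, h2'⟩ := hx
      obtain ⟨b, h3', _⟩ := hy
      obtain ⟨c, hc⟩ := ffill a b w.1 h2' h3'
      exact absurd ⟨c, hc⟩ w.2
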